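/- Let γ ∈ (0,1), let ν be a sub-probability measure on the positive integers, and let r : ℕ → ℝ be bounded. Then all of the following series converge absolutely and r(0) + γ·∑_{k≥1} ξ^ν(k)·r(k) + γ·∑_{i≥1} ν(i)·( ∑_{j≥0} γ^j·r(i+j) ) = ∑_{k≥0} γ^k·r(k). -/

import Mathlib

/-- `ξ^ν(k) = γ^(k−1) − ∑_{κ=0}^{k−1} γ^κ · ν(k−κ)`. -/
noncomputable def xiNu (γ : ℝ) (ν : ℕ → ℝ) (k : ℕ) : ℝ :=
  γ ^ (k - 1) - ∑ κ ∈ Finset.range k, γ ^ κ * ν (k - κ)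

/-- A sub-probability measure on the positive integers. -/
def IsSubProbPNat (ν : ℕ → ℝ) : Prop :=
  ν 0 = 0 ∧ (∀ k, 0 ≤ ν k) ∧ Summable ν ∧ ∑' k, ν k ≤ 1

set_option maxHeartbeats 2000000 in
/-- `r(0) + γ ∑_{k≥1} ξ^ν(k) r(k) + γ ∑_{i≥1} ν(i) ∑_{j≥0} γ^j r(i+j)
  = ∑_{k≥0} γ^k r(k)`, all series converging absolutely. -/
theorem nuBellman_reward_decomposition
    (γ : ℝ) (hγ : γ ∈ Set.Ioo (0 : ℝ) 1)
    (ν : ℕ → ℝ) (hν : IsSubProbPNat ν)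
    (r : ℕ → ℝ) (hr : ∃ C, ∀ k, |r k| ≤ C) :
    Summable (fun k : ℕ => |xiNu γ ν (k + 1) * r (k + 1)|) ∧
    (∀ i : ℕ, Summable (fun j : ℕ => |γ ^ j * r (i + 1 + j)|)) ∧
    Summable (fun i : ℕ => |ν (i + 1) * ∑' j : ℕ, γ ^ j * r (i + 1 + j)|) ∧
    Summable (fun k : ℕ => |γ ^ k * r k|) ∧
    r 0 + γ * (∑' k : ℕ, xiNu γ ν (k + 1) * r (k + 1))
        + γ * (∑' i : ℕ, ν (i + 1) * ∑' j : ℕ, γ ^ j * r (i + 1 + j))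
      = ∑' k : ℕ, γ ^ k * r k := by
  obtain ⟨hγ0, hγ1⟩ := hγ
  obtain ⟨hν0, hνnn, hνsum, hνle⟩ := hν
  obtain ⟨C, hC⟩ := hr
  have hC0 : 0 ≤ C := (abs_nonneg _).trans (hC 0)
  have hγpow : ∀ k : ℕ, (0:ℝ) ≤ γ ^ k := fun k => pow_nonneg hγ0.le k
  have hgeo : Summable (fun k : ℕ => γ ^ k) := summable_geometric_of_lt_one hγ0.le hγ1
  have hν' : Summable (fun i : ℕ => ν (i + 1)) := (summable_nat_add_iff 1).2 hνsum
  set h : ℕ → ℝ := fun k => ∑ p ∈ Finset.HasAntidiagonal.antidiagonal k, γ ^ p.1 * ν (p.2 + 1) with hh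
  have hhnn : ∀ k, 0 ≤ h k := fun k =>
    Finset.sum_nonneg fun p _ => mul_nonneg (hγpow _) (hνnn _)
  have hhsum : Summable h := by
    have h1 : Summable fun k : ℕ => ‖γ ^ k‖ := by
      simpa [Real.norm_eq_abs, abs_of_nonneg (hγpow _)] using hgeo
    have h2 : Summable fun i : ℕ => ‖ν (i + 1)‖ := by
      simpa [Real.norm_eq_abs, abs_of_nonneg (hνnn _)] using hν'
    exact (summable_norm_sum_mul_antidiagonal_of_summable_norm h1 h2).of_norm
  have hξ : ∀ k : ℕ, xiNu γ ν (k + 1) = γ ^ k - h k := by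
    intro k
    have hsum : ∑ κ ∈ Finset.range (k + 1), γ ^ κ * ν (k + 1 - κ) = h k := by
      show _ = ∑ p ∈ Finset.HasAntidiagonal.antidiagonal k, γ ^ p.1 * ν (p.2 + 1)
      rw [Finset.Nat.sum_antidiagonal_eq_sum_range_succ_mk]
      refine Finset.sum_congr rfl fun κ hκ => ?_
      rw [Finset.mem_range] at hκ
      have : k + 1 - κ = k - κ + 1 := by omega
      rw [this]
    simp only [xiNu, Nat.add_sub_cancel]
    rw [hsum]
  -- S1
  have hS1 : Summable (fun k : ℕ => |xiNu γ ν (k + 1) * r (k + 1)|) := by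
    refine Summable.of_nonneg_of_le (fun k => abs_nonneg _) (fun k => ?_)
      ((hgeo.add hhsum).mul_right C)
    rw [abs_mul]
    have h1 : |xiNu γ ν (k + 1)| ≤ γ ^ k + h k := by
      rw [hξ k]
      calc |γ ^ k - h k| ≤ |γ ^ k| + |h k| := abs_sub _ _
        _ = γ ^ k + h k := by rw [abs_of_nonneg (hγpow _), abs_of_nonneg (hhnn _)]
    exact mul_le_mul h1 (hC _) (abs_nonneg _) (add_nonneg (hγpow k) (hhnn k))
  -- S2
  have hS2 : ∀ i : ℕ, Summable (fun j : ℕ => |γ ^ j * r (i + 1 + j)|) := by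
    intro i
    refine Summable.of_nonneg_of_le (fun j => abs_nonneg _) (fun j => ?_) (hgeo.mul_right C)
    rw [abs_mul, abs_of_nonneg (hγpow _)]
    exact mul_le_mul_of_nonneg_left (hC _) (hγpow _)
  -- bound on inner tsums
  have hT : ∀ i : ℕ, |∑' j : ℕ, γ ^ j * r (i + 1 + j)| ≤ (1 - γ)⁻¹ * C := by
    intro i
    calc |∑' j : ℕ, γ ^ j * r (i + 1 + j)| ≤ ∑' j : ℕ, |γ ^ j * r (i + 1 + j)| := by
          exact norm_tsum_le_tsum_norm (f := fun j : ℕ => γ ^ j * r (i + 1 + j))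
              (by simp only [Real.norm_eq_abs]; exact hS2 i)
      _ ≤ ∑' j : ℕ, γ ^ j * C := by
          refine Summable.tsum_le_tsum (fun j => ?_) (hS2 i) (hgeo.mul_right C)
          rw [abs_mul, abs_of_nonneg (hγpow _)]
          exact mul_le_mul_of_nonneg_left (hC _) (hγpow _)
      _ = (1 - γ)⁻¹ * C := by
          rw [tsum_mul_right, tsum_geometric_of_lt_one hγ0.le hγ1]
  -- S3
  have hS3 : Summable (fun i : ℕ => |ν (i + 1) * ∑' j : ℕ, γ ^ j * r (i + 1 + j)|) := by
    refine Summable.of_nonneg_of_le (fun i => abs_nonneg _) (fun i => ?_)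
      (hν'.mul_right ((1 - γ)⁻¹ * C))
    rw [abs_mul, abs_of_nonneg (hνnn _)]
    exact mul_le_mul_of_nonneg_left (hT i) (hνnn _)
  -- S4
  have hS4 : Summable (fun k : ℕ => |γ ^ k * r k|) := by
    refine Summable.of_nonneg_of_le (fun k => abs_nonneg _) (fun k => ?_) (hgeo.mul_right C)
    rw [abs_mul, abs_of_nonneg (hγpow _)]
    exact mul_le_mul_of_nonneg_left (hC _) (hγpow _)
  refine ⟨hS1, hS2, hS3, hS4, ?_⟩
  -- main identity
  have hgsum : Summable (fun k : ℕ => γ ^ k * r (k + 1)) := by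
    refine (summable_abs_iff.mp ?_)
    refine Summable.of_nonneg_of_le (fun k => abs_nonneg _) (fun k => ?_) (hgeo.mul_right C)
    rw [abs_mul, abs_of_nonneg (hγpow _)]
    exact mul_le_mul_of_nonneg_left (hC _) (hγpow _)
  have hhr : Summable (fun k : ℕ => h k * r (k + 1)) := by
    refine (summable_abs_iff.mp ?_)
    refine Summable.of_nonneg_of_le (fun k => abs_nonneg _) (fun k => ?_) (hhsum.mul_right C)
    rw [abs_mul, abs_of_nonneg (hhnn _)]
    exact mul_le_mul_of_nonneg_left (hC _) (hhnn _)
  have hA : ∑' k : ℕ, xiNu γ ν (k + 1) * r (k + 1)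
      = (∑' k : ℕ, γ ^ k * r (k + 1)) - ∑' k : ℕ, h k * r (k + 1) := by
    rw [← Summable.tsum_sub hgsum hhr]
    exact tsum_congr fun k => by rw [hξ k]; ring
  -- Double sum rearrangement
  set F : ℕ × ℕ → ℝ := fun p => ν (p.1 + 1) * (γ ^ p.2 * r (p.1 + 1 + p.2)) with hF
  have hFsum : Summable F := by
    refine summable_abs_iff.mp ?_
    refine Summable.of_nonneg_of_le (fun p => abs_nonneg _) (fun p => ?_)
      (Summable.mul_of_nonneg hν' (hgeo.mul_right C) (fun i => hνnn _)
        (fun j => mul_nonneg (hγpow _) hC0))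
    rw [hF]
    simp only
    rw [abs_mul, abs_mul, abs_of_nonneg (hνnn _), abs_of_nonneg (hγpow _)]
    exact mul_le_mul_of_nonneg_left (mul_le_mul_of_nonneg_left (hC _) (hγpow _)) (hνnn _)
  have hB : (∑' i : ℕ, ν (i + 1) * ∑' j : ℕ, γ ^ j * r (i + 1 + j))
      = ∑' k : ℕ, h k * r (k + 1) := by
    have e1 : (∑' i : ℕ, ν (i + 1) * ∑' j : ℕ, γ ^ j * r (i + 1 + j))
        = ∑' i : ℕ, ∑' j : ℕ, F (i, j) := by
      refine tsum_congr fun i => ?_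
      rw [hF]
      exact (tsum_mul_left).symm
    have e2 : (∑' p : ℕ × ℕ, F p) = ∑' i : ℕ, ∑' j : ℕ, F (i, j) := Summable.tsum_prod' hFsum (fun i => (hFsum.prod_factor i))
    have e3 : (∑' x : Σ n : ℕ, Finset.HasAntidiagonal.antidiagonal n, F x.2) = ∑' p : ℕ × ℕ, F p := by
      exact Finset.HasAntidiagonal.sigmaAntidiagonalEquivProd.tsum_eq F
    have hFs : Summable fun x : Σ n : ℕ, Finset.HasAntidiagonal.antidiagonal n => F x.2 :=
      (Equiv.summable_iff Finset.HasAntidiagonal.sigmaAntidiagonalEquivProd).2 hFsum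
    have e4 : (∑' x : Σ n : ℕ, Finset.HasAntidiagonal.antidiagonal n, F x.2)
        = ∑' n : ℕ, ∑' p : Finset.HasAntidiagonal.antidiagonal n, F p :=
      Summable.tsum_sigma' (fun n => (hasSum_fintype _).summable) hFs
    have e5 : ∀ n : ℕ, (∑' p : Finset.HasAntidiagonal.antidiagonal n, F (p : ℕ × ℕ)) = h n * r (n + 1) := by
      intro n
      have hswap : h n = ∑ p ∈ Finset.HasAntidiagonal.antidiagonal n, ν (p.1 + 1) * γ ^ p.2 := by
        show (∑ p ∈ Finset.HasAntidiagonal.antidiagonal n, γ ^ p.1 * ν (p.2 + 1)) = _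
        conv_lhs => rw [← Finset.HasAntidiagonal.map_swap_antidiagonal]
        rw [Finset.sum_map]
        exact Finset.sum_congr rfl fun p _ => by
          simp [Function.Embedding.coeFn_mk, Prod.fst_swap, Prod.snd_swap, mul_comm]
      rw [Finset.tsum_subtype (Finset.HasAntidiagonal.antidiagonal n) F, hswap, Finset.sum_mul]
      refine Finset.sum_congr rfl fun p hp => ?_
      rw [Finset.HasAntidiagonal.mem_antidiagonal] at hp
      show ν (p.1 + 1) * (γ ^ p.2 * r (p.1 + 1 + p.2)) = ν (p.1 + 1) * γ ^ p.2 * r (n + 1)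
      rw [show p.1 + 1 + p.2 = n + 1 from by omega]
      ring
    rw [e1, ← e2, ← e3, e4]
    exact tsum_congr e5
  have hC' : (∑' k : ℕ, γ ^ k * r k)
      = r 0 + γ * ∑' k : ℕ, γ ^ k * r (k + 1) := by
    have hs : Summable fun k : ℕ => γ ^ k * r k := summable_abs_iff.mp hS4
    rw [Summable.tsum_eq_zero_add hs]
    simp only [pow_zero, one_mul]
    congr 1
    rw [← tsum_mul_left]
    exact tsum_congr fun k => by ring
  rw [hA, hB, hC']
  ring
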